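/- The set X = {-1, 1}^n of vertices of the n-dimensional hypercube (viewed in ℝ^n) has the property that for any two distinct vertices x₁, x₂ there exist two parallel hyperplanes, one through x₁ and one through x₂, such that X lies in the closed slab between them. Hence the maximal cardinality of such an antipodal set in ℝ^n is exactly 2^n. -/

import Mathlib

/-- The set `X = {-1,1}^n` of vertices of the hypercube in `ℝⁿ` has the antipodality
property: for any two distinct vertices `x₁, x₂` there are two parallel hyperplanes,
one through each, with `X` lying in the closed slab between them. Moreover its
cardinality is exactly `2^n`, which is maximal for sets with this property. -/
theorem hypercube_vertices_antipodal (n : ℕ) :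
    (∀ x₁ ∈ {x : EuclideanSpace ℝ (Fin n) | ∀ i, x i = 1 ∨ x i = -1},
      ∀ x₂ ∈ {x : EuclideanSpace ℝ (Fin n) | ∀ i, x i = 1 ∨ x i = -1}, x₁ ≠ x₂ →
        ∃ f : EuclideanSpace ℝ (Fin n) →ₗ[ℝ] ℝ, f ≠ 0 ∧
          ∀ x ∈ {x : EuclideanSpace ℝ (Fin n) | ∀ i, x i = 1 ∨ x i = -1},
            f x₂ ≤ f x ∧ f x ≤ f x₁) ∧
    {x : EuclideanSpace ℝ (Fin n) | ∀ i, x i = 1 ∨ x i = -1}.ncard = 2 ^ n := by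
  constructor
  · intro x₁ hx₁ x₂ hx₂ hne
    have : ∃ i, x₁ i ≠ x₂ i := by
      by_contra h
      push_neg at h
      exact hne (PiLp.ext h)
    obtain ⟨i, hi⟩ := this
    -- f x = (x₁ i) * x i
    refine ⟨(x₁ i) • ((LinearMap.proj i : (Fin n → ℝ) →ₗ[ℝ] ℝ).comp (WithLp.linearEquiv 2 ℝ (Fin n → ℝ)).toLinearMap : EuclideanSpace ℝ (Fin n) →ₗ[ℝ] ℝ), ?_, ?_⟩
    · intro h
      have h1 := LinearMap.congr_fun h (EuclideanSpace.single i 1)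
      simp [EuclideanSpace.single_apply] at h1
      rcases hx₁ i with h2 | h2 <;> rw [h2] at h1 <;> norm_num at h1
    · intro x hx
      have key : ∀ y : EuclideanSpace ℝ (Fin n), (∀ j, y j = 1 ∨ y j = -1) →
          x₁ i * y i = 1 ∨ x₁ i * y i = -1 := by
        intro y hy
        rcases hx₁ i with h1 | h1 <;> rcases hy i with h2 | h2 <;>
          rw [h1, h2] <;> norm_num
      have hx1 : x₁ i * x₁ i = 1 := by
        rcases hx₁ i with h1 | h1 <;> rw [h1] <;> norm_num
      have hx2 : x₁ i * x₂ i = -1 := by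
        rcases key x₂ hx₂ with h | h
        · exfalso
          rcases hx₁ i with h1 | h1 <;> rw [h1] at h <;>
            · apply hi; rcases hx₂ i with h2 | h2 <;> rw [h1, h2] <;>
                rw [h2] at h <;> norm_num at h
        · exact h
      simp only [LinearMap.smul_apply, LinearMap.coe_coe, smul_eq_mul]
      rcases key x hx with h | h <;>
        exact ⟨by show x₁ i * x₂ i ≤ x₁ i * x i; linarith,
               by show x₁ i * x i ≤ x₁ i * x₁ i; linarith⟩
  · have hset : {x : EuclideanSpace ℝ (Fin n) | ∀ i, x i = 1 ∨ x i = -1} =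
        Set.range (fun b : Fin n → Bool => (WithLp.toLp 2 (fun i => if b i then (1:ℝ) else -1) : EuclideanSpace ℝ (Fin n))) := by
      ext x
      constructor
      · intro hx
        refine ⟨fun i => if x i = 1 then true else false, ?_⟩
        ext i
        rcases hx i with h | h <;> norm_num [h]
      · rintro ⟨b, rfl⟩ i
        by_cases h : b i <;> simp [h]
    rw [hset]
    have hinj : Function.Injective
        (fun b : Fin n → Bool => (WithLp.toLp 2 (fun i => if b i then (1:ℝ) else -1) : EuclideanSpace ℝ (Fin n))) := by
      intro b b' h
      funext i
      have := congr_fun (congrArg WithLp.ofLp h) i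
      by_cases hb : b i <;> by_cases hb' : b' i <;> simp [hb, hb'] at this ⊢ <;> norm_num at this
    rw [← Nat.card_coe_set_eq, Nat.card_range_of_injective hinj]
    simp [Nat.card_eq_fintype_card]
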